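/- Simulating each single instruction of a register machine with 8 registers by an 8-counter machine requires 2^8 transition rules (one for each combination of empty/non-empty status of the eight counters); consequently a universal register machine with 21 instructions is simulated by a counter machine using 21·2^8 transitions, plus 2^8 transitions for comparing the output counter with the input word, plus 2^8 transitions for emptying all counters, plus 3 initialization transitions, for a total of m = 23·2^8 + 3 = 5891 transition rules. -/

import Mathlib

/-- What a counter machine transition reads on the input tape: a symbol of the
input alphabet, the blank symbol `B` (past the end of the input), or `λ`. -/
inductive CMInput (T : Type) where
  | sym (a : T) : CMInput T
  | blank : CMInput T
  | eps : CMInput T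

/-- An `n`-counter machine: a finite-state device with a one-way read-only
input tape and `n` counters.  A rule `(q, x, zs, q', eff)` applies in state `q`
when the input condition `x` holds and counter `i` is zero iff `zs i = true`;
it moves to state `q'` and adds `eff i ∈ {-1, 0, +1}` to counter `i`. -/
structure CounterMachine (T : Type) (n : ℕ) where
  State : Type
  stateFinite : Finite State
  q0 : State
  qF : State
  rules : Set (State × CMInput T × (Fin n → Bool) × State × (Fin n → ℤ))
  rulesFinite : rules.Finite
  effSmall : ∀ r ∈ rules, ∀ i, r.2.2.2.2 i = -1 ∨ r.2.2.2.2 i = 0 ∨ r.2.2.2.2 i = 1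

namespace CounterMachine

variable {T : Type} {n : ℕ}

/-- A configuration: current state, remaining input, counter contents. -/
def Cfg (M : CounterMachine T n) : Type := M.State × List T × (Fin n → ℕ)

/-- One transition step of a counter machine. -/
def Step (M : CounterMachine T n) (c c' : M.Cfg) : Prop :=
  ∃ inp zs eff, (c.1, inp, zs, c'.1, eff) ∈ M.rules ∧
    (∀ i, zs i = true ↔ c.2.2 i = 0) ∧
    (∀ i, (c'.2.2 i : ℤ) = (c.2.2 i : ℤ) + eff i) ∧
    (match inp with
     | CMInput.sym a => c.2.1 = a :: c'.2.1
     | CMInput.blank => c.2.1 = [] ∧ c'.2.1 = []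
     | CMInput.eps => c'.2.1 = c.2.1)

/-- The machine, started in `q0` with counter contents `init`, reads the whole
input word `w` and reaches the accepting state `qF`. -/
def AcceptsFrom (M : CounterMachine T n) (init : Fin n → ℕ) (w : List T) : Prop :=
  ∃ cnt : Fin n → ℕ, Relation.ReflTransGen M.Step (M.q0, w, init) (M.qF, [], cnt)

/-- The language accepted by a counter machine (started with empty counters). -/
def language (M : CounterMachine T n) : Language T :=
  { w | M.AcceptsFrom (fun _ => 0) w }

end CounterMachine

/-- Register machine instructions over `m` registers with labels from `L`. -/
inductive RMInstr (m : ℕ) (L : Type) where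
  | add (r : Fin m) (next : L) : RMInstr m L
  | check (r : Fin m) (ifZero ifPos : L) : RMInstr m L
  | checksub (r : Fin m) (ifPos ifZero : L) : RMInstr m L
  | halt : RMInstr m L

/-- A register machine with `m` registers, a finite set of labels, a start
label `l0`, a halting label `lh` (labelling the HALT instruction), and
distinguished input and output registers. -/
structure RegisterMachine (m : ℕ) where
  Lbl : Type
  lblFinite : Finite Lbl
  l0 : Lbl
  lh : Lbl
  prog : Lbl → RMInstr m Lbl
  haltAt : prog lh = RMInstr.halt
  inputReg : Fin m
  outputReg : Fin m

namespace RegisterMachine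

variable {m : ℕ}

/-- One step of a register machine on a configuration (label, registers). -/
def Step (M : RegisterMachine m) (c c' : M.Lbl × (Fin m → ℕ)) : Prop :=
  match M.prog c.1 with
  | RMInstr.add r next =>
      c'.1 = next ∧ c'.2 = Function.update c.2 r (c.2 r + 1)
  | RMInstr.check r ifZero ifPos =>
      ((c.2 r = 0 ∧ c'.1 = ifZero) ∨ (c.2 r ≠ 0 ∧ c'.1 = ifPos)) ∧ c'.2 = c.2
  | RMInstr.checksub r ifPos ifZero =>
      (c.2 r ≠ 0 ∧ c'.1 = ifPos ∧ c'.2 = Function.update c.2 r (c.2 r - 1)) ∨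
      (c.2 r = 0 ∧ c'.1 = ifZero ∧ c'.2 = c.2)
  | RMInstr.halt => False

/-- `M` computes `y` on input `x`: started at `l0` with `x` in the input
register and all other registers zero, `M` reaches the halting label with `y`
in the output register. -/
def Computes (M : RegisterMachine m) (x y : ℕ) : Prop :=
  ∃ regs : Fin m → ℕ,
    Relation.ReflTransGen M.Step
      (M.l0, Function.update (fun _ => 0) M.inputReg x) (M.lh, regs) ∧
    regs M.outputReg = y

end RegisterMachine
namespace UCMProof

open CounterMachine RegisterMachine

/-- States of the simulating counter machine. -/
inductive St (L : Type) where
  | start : St L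
  | sim : L → St L
  | cmp : St L
  | accept : St L
  | dead : St L
  | pad : Fin 255 → St L

def St.code {L : Type} : St L → (L ⊕ Fin 255 ⊕ Fin 4)
  | .start => Sum.inr (Sum.inr 0)
  | .sim l => Sum.inl l
  | .cmp => Sum.inr (Sum.inr 1)
  | .accept => Sum.inr (Sum.inr 2)
  | .dead => Sum.inr (Sum.inr 3)
  | .pad k => Sum.inr (Sum.inl k)

lemma St.code_injective {L : Type} : Function.Injective (St.code (L := L)) := by
  rintro a b h
  cases a <;> cases b <;> simp_all [St.code]

instance {L : Type} [Finite L] : Finite (St L) :=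
  Finite.of_injective _ St.code_injective

def e (r : Fin 8) : Fin 8 → ℤ := fun i => if i = r then 1 else 0
def ne' (r : Fin 8) : Fin 8 → ℤ := fun i => if i = r then -1 else 0
def zsOf (v : Fin 8 → ℕ) : Fin 8 → Bool := fun i => decide (v i = 0)
def allZ : Fin 8 → Bool := fun _ => true
def onlyIn (r : Fin 8) : Fin 8 → Bool := fun i => decide (¬ i = r)

abbrev Idx (L : Type) :=
  (Bool × Bool) ⊕ (L × (Fin 8 → Bool)) ⊕ (Fin 8 → Bool) ⊕ Fin 255

variable (M : RegisterMachine 8)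

open Classical in
noncomputable def simTgt (l : M.Lbl) (zs : Fin 8 → Bool) : St M.Lbl :=
  match M.prog l with
  | RMInstr.add _ next => St.sim next
  | RMInstr.check r z p => St.sim (if zs r then z else p)
  | RMInstr.checksub r p z => St.sim (if zs r then z else p)
  | RMInstr.halt => if l = M.lh then St.cmp else St.dead

/-- Counter effect of the rule simulating instruction at `l` under zero-pattern `zs`. -/
def simEff (l : M.Lbl) (zs : Fin 8 → Bool) : Fin 8 → ℤ :=
  match M.prog l with
  | RMInstr.add r _ => e r
  | RMInstr.check _ _ _ => 0
  | RMInstr.checksub r _ _ => if zs r then 0 else ne' r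
  | RMInstr.halt => 0

def cmpInp (zs : Fin 8 → Bool) : CMInput Unit :=
  if zs M.outputReg then CMInput.eps else CMInput.sym ()

def cmpTgt (zs : Fin 8 → Bool) : St M.Lbl :=
  if zs M.outputReg then St.accept else St.cmp

def cmpEff (zs : Fin 8 → Bool) : Fin 8 → ℤ :=
  if zs M.outputReg then 0 else ne' M.outputReg

/-- The rules of the simulating counter machine. -/
noncomputable def rule : Idx M.Lbl →
    St M.Lbl × CMInput Unit × (Fin 8 → Bool) × St M.Lbl × (Fin 8 → ℤ)
  | Sum.inl (cb, pb) =>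
      (St.start, CMInput.eps, if pb then allZ else onlyIn M.inputReg,
        if cb then St.start else St.sim M.l0,
        if cb then e M.inputReg else 0)
  | Sum.inr (Sum.inl (l, zs)) => (St.sim l, CMInput.eps, zs, simTgt M l zs, simEff M l zs)
  | Sum.inr (Sum.inr (Sum.inl zs)) => (St.cmp, cmpInp M zs, zs, cmpTgt M zs, cmpEff M zs)
  | Sum.inr (Sum.inr (Sum.inr k)) => (St.pad k, CMInput.eps, allZ, St.pad k, 0)

lemma rule_injective : Function.Injective (rule M) := by
  rintro (⟨cb, pb⟩ | ⟨l, zs⟩ | zs | k) (⟨cb', pb'⟩ | ⟨l', zs'⟩ | zs' | k') h <;>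
    simp only [rule, Prod.mk.injEq] at h
  · -- start/start
    obtain ⟨-, -, hpat, htgt, -⟩ := h
    have hp : pb = pb' := by
      cases pb <;> cases pb' <;> first
        | rfl
        | (exfalso
           have := congrFun hpat M.inputReg
           simp [allZ, onlyIn] at this)
    have hc : cb = cb' := by
      cases cb <;> cases cb' <;> simp_all
    simp [hp, hc]
  · simp_all
  · simp_all
  · simp_all
  · simp_all
  · obtain ⟨h1, -, h3, -⟩ := h; simp_all
  · simp_all
  · simp_all
  · simp_all
  · simp_all
  · obtain ⟨-, -, h3, -⟩ := h; simp_all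
  · simp_all
  · simp_all
  · simp_all
  · simp_all
  · simp_all

lemma rule_effSmall (idx : Idx M.Lbl) (i : Fin 8) :
    (rule M idx).2.2.2.2 i = -1 ∨ (rule M idx).2.2.2.2 i = 0 ∨ (rule M idx).2.2.2.2 i = 1 := by
  have he : ∀ r : Fin 8, e r i = -1 ∨ e r i = 0 ∨ e r i = 1 := by
    intro r; unfold e; split_ifs <;> simp
  have hn : ∀ r : Fin 8, ne' r i = -1 ∨ ne' r i = 0 ∨ ne' r i = 1 := by
    intro r; unfold ne'; split_ifs <;> simp
  rcases idx with ⟨cb, pb⟩ | ⟨l, zs⟩ | zs | k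
  · simp only [rule]; cases cb <;> simp [he]
  · simp only [rule, simEff]
    rcases hp : M.prog l with _ | _ | ⟨r, p, z⟩ | _ <;> simp [he, hn]
    split_ifs <;> simp [hn]
  · simp only [rule, cmpEff]; split_ifs <;> simp [hn]
  · simp [rule]

/-- The simulating counter machine. -/
noncomputable def C : CounterMachine Unit 8 where
  State := St M.Lbl
  stateFinite := by have := M.lblFinite; infer_instance
  q0 := St.start
  qF := St.accept
  rules := Set.range (rule M)
  rulesFinite := by
    have := M.lblFinite
    exact Set.finite_range _
  effSmall := by rintro r ⟨idx, rfl⟩ i; exact rule_effSmall M idx i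

lemma zsOf_spec (v : Fin 8 → ℕ) : ∀ i, zsOf v i = true ↔ v i = 0 := by
  intro i; simp [zsOf]

lemma zs_eq_zsOf {zs : Fin 8 → Bool} {v : Fin 8 → ℕ}
    (h : ∀ i, zs i = true ↔ v i = 0) : zs = zsOf v := by
  funext i
  have := h i
  by_cases hv : v i = 0 <;> simp [zsOf, hv] at this ⊢ <;> simp_all

/- counter arithmetic helpers -/
lemma cnt_zero {v v' : Fin 8 → ℕ}
    (h : ∀ i, (v' i : ℤ) = (v i : ℤ) + (0 : Fin 8 → ℤ) i) : v' = v := by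
  funext i; have := h i; simp at this; exact_mod_cast this

lemma cnt_add {v v' : Fin 8 → ℕ} {r : Fin 8}
    (h : ∀ i, (v' i : ℤ) = (v i : ℤ) + e r i) :
    v' = Function.update v r (v r + 1) := by
  funext i
  have hi := h i
  by_cases hir : i = r
  · subst hir; simp [e] at hi; simp [Function.update]; omega
  · simp [e, hir] at hi; simp [Function.update, hir]; omega

lemma cnt_sub {v v' : Fin 8 → ℕ} {r : Fin 8} (hr : v r ≠ 0)
    (h : ∀ i, (v' i : ℤ) = (v i : ℤ) + ne' r i) :
    v' = Function.update v r (v r - 1) := by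
  funext i
  have hi := h i
  by_cases hir : i = r
  · subst hir; simp [ne'] at hi; simp [Function.update]; omega
  · simp [ne', hir] at hi; simp [Function.update, hir]; omega

lemma cnt_add' (v : Fin 8 → ℕ) (r : Fin 8) :
    ∀ i, ((Function.update v r (v r + 1)) i : ℤ) = (v i : ℤ) + e r i := by
  intro i
  by_cases hir : i = r
  · subst hir; simp [e, Function.update]
  · simp [e, hir, Function.update]

lemma cnt_sub' (v : Fin 8 → ℕ) (r : Fin 8) (hr : v r ≠ 0) :
    ∀ i, ((Function.update v r (v r - 1)) i : ℤ) = (v i : ℤ) + ne' r i := by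
  intro i
  by_cases hir : i = r
  · subst hir; simp [ne', Function.update]; omega
  · simp [ne', hir, Function.update]

lemma cnt_zero' (v : Fin 8 → ℕ) :
    ∀ i, (v i : ℤ) = (v i : ℤ) + (0 : Fin 8 → ℤ) i := by
  intro i; simp


/-! ### Step construction -/

lemma mk_step_eps {s s' : St M.Lbl} {w : List Unit} {v v' : Fin 8 → ℕ}
    {eff : Fin 8 → ℤ} (idx : Idx M.Lbl)
    (hidx : rule M idx = (s, CMInput.eps, zsOf v, s', eff))
    (hv' : ∀ i, (v' i : ℤ) = (v i : ℤ) + eff i) :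
    (C M).Step (s, w, v) (s', w, v') :=
  ⟨CMInput.eps, zsOf v, eff, ⟨idx, hidx⟩, zsOf_spec v, hv', rfl⟩

lemma mk_step_sym {s s' : St M.Lbl} {w : List Unit} {v v' : Fin 8 → ℕ}
    {eff : Fin 8 → ℤ} (idx : Idx M.Lbl)
    (hidx : rule M idx = (s, CMInput.sym (), zsOf v, s', eff))
    (hv' : ∀ i, (v' i : ℤ) = (v i : ℤ) + eff i) :
    (C M).Step (s, () :: w, v) (s', w, v') :=
  ⟨CMInput.sym (), zsOf v, eff, ⟨idx, hidx⟩, zsOf_spec v, hv', rfl⟩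

/-! ### Step inversion -/

lemma step_start {w : List Unit} {v : Fin 8 → ℕ} {c' : (C M).Cfg}
    (h : (C M).Step (St.start, w, v) c') :
    c' = (St.start, w, Function.update v M.inputReg (v M.inputReg + 1)) ∨
    c' = (St.sim M.l0, w, v) := by
  obtain ⟨s', w', v'⟩ := c'
  obtain ⟨inp, zs, eff, ⟨idx, hidx⟩, hzs, heff, hinp⟩ := h
  rcases idx with ⟨cb, pb⟩ | ⟨l, zs0⟩ | zs0 | k <;>
    simp only [rule, C, Prod.mk.injEq, Prod.ext_iff] at hidx
  · obtain ⟨-, hi, -, ht, he⟩ := hidx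
    subst hi; subst he
    replace hinp : w' = w := hinp
    subst hinp
    cases cb
    · right
      simp only [Bool.false_eq_true, if_false] at ht heff
      rw [← ht, cnt_zero heff]; rfl
    · left
      simp only [if_true] at ht heff
      rw [← ht, cnt_add heff]; rfl
  · exact absurd hidx.1 (by simp)
  · exact absurd hidx.1 (by simp)
  · exact absurd hidx.1 (by simp)

lemma simTgt_add {l r next} (hp : M.prog l = RMInstr.add r next) (zs : Fin 8 → Bool) :
    simTgt M l zs = St.sim next := by unfold simTgt; rw [hp]

lemma simTgt_check {l r z p} (hp : M.prog l = RMInstr.check r z p) (zs : Fin 8 → Bool) :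
    simTgt M l zs = St.sim (if zs r then z else p) := by unfold simTgt; rw [hp]

lemma simTgt_checksub {l r p z} (hp : M.prog l = RMInstr.checksub r p z) (zs : Fin 8 → Bool) :
    simTgt M l zs = St.sim (if zs r then z else p) := by unfold simTgt; rw [hp]

open Classical in
lemma simTgt_halt {l} (hp : M.prog l = RMInstr.halt) (zs : Fin 8 → Bool) :
    simTgt M l zs = (if l = M.lh then St.cmp else St.dead) := by
  unfold simTgt; rw [hp]

lemma simEff_add {l r next} (hp : M.prog l = RMInstr.add r next) (zs : Fin 8 → Bool) :
    simEff M l zs = e r := by unfold simEff; rw [hp]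

lemma simEff_check {l r z p} (hp : M.prog l = RMInstr.check r z p) (zs : Fin 8 → Bool) :
    simEff M l zs = 0 := by unfold simEff; rw [hp]

lemma simEff_checksub {l r p z} (hp : M.prog l = RMInstr.checksub r p z) (zs : Fin 8 → Bool) :
    simEff M l zs = (if zs r then 0 else ne' r) := by unfold simEff; rw [hp]

lemma simEff_halt {l} (hp : M.prog l = RMInstr.halt) (zs : Fin 8 → Bool) :
    simEff M l zs = 0 := by unfold simEff; rw [hp]

open Classical in
lemma step_sim {l : M.Lbl} {w : List Unit} {v : Fin 8 → ℕ} {c' : (C M).Cfg}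
    (h : (C M).Step (St.sim l, w, v) c') :
    (∃ d, M.Step (l, v) d ∧ c' = (St.sim d.1, w, d.2)) ∨
    (M.prog l = RMInstr.halt ∧
      c' = ((if l = M.lh then St.cmp else St.dead), w, v)) := by
  classical
  obtain ⟨s', w', v'⟩ := c'
  obtain ⟨inp, zs, eff, ⟨idx, hidx⟩, hzs, heff, hinp⟩ := h
  have hzv : zs = zsOf v := zs_eq_zsOf hzs
  subst hzv
  rcases idx with ⟨cb, pb⟩ | ⟨l', zs0⟩ | zs0 | k <;>
    simp only [rule, C, Prod.mk.injEq, Prod.ext_iff] at hidx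
  · exact absurd hidx.1 (by simp)
  · obtain ⟨hl, hi, hz, ht, he⟩ := hidx
    replace hl : l = l' := by have := hl; simp at this; exact this.symm
    subst hl; subst hi; subst hz; subst he
    replace hinp : w' = w := hinp
    subst hinp
    rcases hp : M.prog l with ⟨r, next⟩ | ⟨r, z, p⟩ | ⟨r, p, z⟩ | _
    · -- add
      rw [simTgt_add M hp] at ht
      simp only [simEff_add M hp] at heff
      left
      refine ⟨(next, Function.update v r (v r + 1)), ?_, by rw [← ht, cnt_add heff]; rfl⟩
      simp [RegisterMachine.Step, hp]
    · -- check
      rw [simTgt_check M hp] at ht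
      simp only [simEff_check M hp] at heff
      left
      by_cases hr : v r = 0
      · have hz : zsOf v r = true := by simp [zsOf, hr]
        rw [hz, if_pos rfl] at ht
        refine ⟨(z, v), ?_, by rw [← ht, cnt_zero heff]; rfl⟩
        simp [RegisterMachine.Step, hp, hr]
      · have hz : zsOf v r = false := by simp [zsOf, hr]
        rw [hz] at ht
        simp only [Bool.false_eq_true, if_false] at ht
        refine ⟨(p, v), ?_, by rw [← ht, cnt_zero heff]; rfl⟩
        simp [RegisterMachine.Step, hp, hr]
    · -- checksub
      rw [simTgt_checksub M hp] at ht
      simp only [simEff_checksub M hp] at heff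
      left
      by_cases hr : v r = 0
      · have hz : zsOf v r = true := by simp [zsOf, hr]
        rw [hz, if_pos rfl] at ht
        rw [hz] at heff
        simp only [if_true] at heff
        refine ⟨(z, v), ?_, by rw [← ht, cnt_zero heff]; rfl⟩
        simp [RegisterMachine.Step, hp, hr]
      · have hz : zsOf v r = false := by simp [zsOf, hr]
        rw [hz] at ht heff
        simp only [Bool.false_eq_true, if_false] at ht heff
        refine ⟨(p, Function.update v r (v r - 1)), ?_, by rw [← ht, cnt_sub hr heff]; rfl⟩
        simp [RegisterMachine.Step, hp, hr]
    · -- halt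
      rw [simTgt_halt M hp] at ht
      simp only [simEff_halt M hp] at heff
      right
      exact ⟨rfl, by rw [← ht, cnt_zero heff]; rfl⟩
  · exact absurd hidx.1 (by simp)
  · exact absurd hidx.1 (by simp)


lemma step_cmp {w : List Unit} {v : Fin 8 → ℕ} {c' : (C M).Cfg}
    (h : (C M).Step (St.cmp, w, v) c') :
    (v M.outputReg = 0 ∧ c' = (St.accept, w, v)) ∨
    (∃ w', w = () :: w' ∧ v M.outputReg ≠ 0 ∧
      c' = (St.cmp, w', Function.update v M.outputReg (v M.outputReg - 1))) := by
  obtain ⟨s', w', v'⟩ := c'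
  obtain ⟨inp, zs, eff, ⟨idx, hidx⟩, hzs, heff, hinp⟩ := h
  have hzv : zs = zsOf v := zs_eq_zsOf hzs
  subst hzv
  rcases idx with ⟨cb, pb⟩ | ⟨l', zs0⟩ | zs0 | k <;>
    simp only [rule, C, Prod.mk.injEq, Prod.ext_iff] at hidx
  · exact absurd hidx.1 (by simp)
  · exact absurd hidx.1 (by simp)
  · obtain ⟨-, hi, hz, ht, he⟩ := hidx
    subst hz; subst he; subst hi
    by_cases hr : v M.outputReg = 0
    · left
      have hz : zsOf v M.outputReg = true := by simp [zsOf, hr]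
      rw [cmpInp, hz, if_pos rfl] at hinp
      rw [cmpTgt, hz, if_pos rfl] at ht
      rw [cmpEff, hz, if_pos rfl] at heff
      replace hinp : w' = w := hinp
      subst hinp
      exact ⟨hr, by rw [← ht, cnt_zero (v := v) (v' := v') heff]; rfl⟩
    · right
      have hz : zsOf v M.outputReg = false := by simp [zsOf, hr]
      rw [cmpInp, hz] at hinp
      rw [cmpTgt, hz] at ht
      rw [cmpEff, hz] at heff
      simp only [Bool.false_eq_true, if_false] at hinp ht heff
      exact ⟨w', hinp, hr, by rw [← ht, cnt_sub (v := v) (v' := v') hr heff]; rfl⟩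
  · exact absurd hidx.1 (by simp)

lemma no_step_accept {w : List Unit} {v : Fin 8 → ℕ} {c' : (C M).Cfg} :
    ¬ (C M).Step (St.accept, w, v) c' := by
  rintro ⟨inp, zs, eff, ⟨idx, hidx⟩, -⟩
  rcases idx with ⟨cb, pb⟩ | ⟨l', zs0⟩ | zs0 | k <;>
    simp only [rule, C, Prod.mk.injEq, Prod.ext_iff] at hidx <;>
    exact absurd hidx.1 (by simp)

lemma no_step_dead {w : List Unit} {v : Fin 8 → ℕ} {c' : (C M).Cfg} :
    ¬ (C M).Step (St.dead, w, v) c' := by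
  rintro ⟨inp, zs, eff, ⟨idx, hidx⟩, -⟩
  rcases idx with ⟨cb, pb⟩ | ⟨l', zs0⟩ | zs0 | k <;>
    simp only [rule, C, Prod.mk.injEq, Prod.ext_iff] at hidx <;>
    exact absurd hidx.1 (by simp)

/-! ### Backward analysis -/

lemma accept_empty {w : List Unit} {v cnt : Fin 8 → ℕ}
    (h : Relation.ReflTransGen (C M).Step (St.accept, w, v) (St.accept, [], cnt)) :
    w = [] := by
  rcases h.cases_head with heq | ⟨c, hstep, -⟩
  · simpa using congrArg (fun c => c.2.1) heq
  · exact absurd hstep (no_step_accept M)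

lemma dead_no_acc {w : List Unit} {v cnt : Fin 8 → ℕ}
    (h : Relation.ReflTransGen (C M).Step (St.dead, w, v) (St.accept, [], cnt)) :
    False := by
  rcases h.cases_head with heq | ⟨c, hstep, -⟩
  · exact absurd (congrArg (fun c => c.1) heq) (by simp)
  · exact absurd hstep (no_step_dead M)

lemma cmp_len {cnt : Fin 8 → ℕ} :
    ∀ (w : List Unit) (v : Fin 8 → ℕ),
      Relation.ReflTransGen (C M).Step (St.cmp, w, v) (St.accept, [], cnt) →
      w.length = v M.outputReg := by
  intro w
  induction w with
  | nil =>
      intro v h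
      rcases h.cases_head with heq | ⟨c, hstep, htail⟩
      · exact absurd (congrArg (fun c => c.1) heq) (by simp)
      · rcases step_cmp M hstep with ⟨hr, rfl⟩ | ⟨w', hw, -, -⟩
        · simp [hr]
        · exact absurd hw (by simp)
  | cons a w ih =>
      intro v h
      rcases h.cases_head with heq | ⟨c, hstep, htail⟩
      · exact absurd (congrArg (fun c => c.1) heq) (by simp)
      · rcases step_cmp M hstep with ⟨hr, rfl⟩ | ⟨w', hw, hr, rfl⟩
        · exact absurd (accept_empty M htail) (by simp)
        · injection hw with h1 h2
          subst h2
          have hL := ih _ htail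
          rw [Function.update_self] at hL
          simp only [List.length_cons, hL]
          omega

lemma sim_back {cnt : Fin 8 → ℕ} {c : (C M).Cfg}
    (h : Relation.ReflTransGen (C M).Step c (St.accept, [], cnt)) :
    ∀ l w v, c = (St.sim l, w, v) →
      ∃ regs, Relation.ReflTransGen M.Step (l, v) (M.lh, regs) ∧
        w.length = regs M.outputReg := by
  classical
  induction h using Relation.ReflTransGen.head_induction_on with
  | refl =>
      intro l w v heq
      exact absurd (congrArg (fun c => c.1) heq) (by simp)
  | head hstep htail ih =>
      rintro l w v rfl
      rcases step_sim M hstep with ⟨⟨l', v'⟩, hrm, rfl⟩ | ⟨hhalt, rfl⟩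
      · obtain ⟨regs, hrun, hlen⟩ := ih l' w v' rfl
        exact ⟨regs, hrun.head hrm, hlen⟩
      · by_cases hl : l = M.lh
        · subst hl
          rw [if_pos rfl] at htail
          exact ⟨v, Relation.ReflTransGen.refl, cmp_len M w v htail⟩
        · rw [if_neg hl] at htail
          exact absurd htail (dead_no_acc M)

lemma start_back {cnt : Fin 8 → ℕ} {c : (C M).Cfg}
    (h : Relation.ReflTransGen (C M).Step c (St.accept, [], cnt)) :
    ∀ w v, c = (St.start, w, v) →
      ∃ x regs,
        Relation.ReflTransGen M.Step
          (M.l0, Function.update v M.inputReg (v M.inputReg + x)) (M.lh, regs) ∧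
        w.length = regs M.outputReg := by
  induction h using Relation.ReflTransGen.head_induction_on with
  | refl =>
      intro w v heq
      exact absurd (congrArg (fun c => c.1) heq) (by simp)
  | head hstep htail ih =>
      rintro w v rfl
      rcases step_start M hstep with rfl | rfl
      · obtain ⟨x, regs, hrun, hlen⟩ := ih w _ rfl
        refine ⟨x + 1, regs, ?_, hlen⟩
        have : Function.update (Function.update v M.inputReg (v M.inputReg + 1))
            M.inputReg (Function.update v M.inputReg (v M.inputReg + 1) M.inputReg + x) =
            Function.update v M.inputReg (v M.inputReg + (x + 1)) := by
          rw [Function.update_idem, Function.update_self, add_assoc, add_comm 1 x]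
        rwa [this] at hrun
      · obtain ⟨regs, hrun, hlen⟩ := sim_back M htail M.l0 w v rfl
        refine ⟨0, regs, ?_, hlen⟩
        simpa [Function.update_eq_self] using hrun


/-! ### Forward simulation -/

lemma fwd_step {l : M.Lbl} {v : Fin 8 → ℕ} {d : M.Lbl × (Fin 8 → ℕ)} (w : List Unit)
    (hrm : M.Step (l, v) d) :
    (C M).Step (St.sim l, w, v) (St.sim d.1, w, d.2) := by
  classical
  obtain ⟨l', v'⟩ := d
  rcases hp : M.prog l with ⟨r, next⟩ | ⟨r, z, p⟩ | ⟨r, p, z⟩ | _ <;>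
    simp only [RegisterMachine.Step, hp] at hrm
  · -- add
    obtain ⟨rfl, rfl⟩ := hrm
    refine mk_step_eps M (Sum.inr (Sum.inl (l, zsOf v))) ?_ (cnt_add' v r)
    simp only [rule, simTgt_add M hp, simEff_add M hp]
  · -- check
    obtain ⟨hor, hv⟩ := hrm
    rw [hv]
    refine mk_step_eps M (Sum.inr (Sum.inl (l, zsOf v))) ?_ (cnt_zero' v)
    simp only [rule, simTgt_check M hp, simEff_check M hp]
    rcases hor with ⟨hr, rfl⟩ | ⟨hr, rfl⟩
    · simp [zsOf, hr]
    · simp [zsOf, hr]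
  · -- checksub
    rcases hrm with ⟨hr, rfl, rfl⟩ | ⟨hr, rfl, hv⟩
    · refine mk_step_eps M (Sum.inr (Sum.inl (l, zsOf v))) ?_ (cnt_sub' v r hr)
      simp [rule, simTgt_checksub M hp, simEff_checksub M hp, zsOf, hr]
    · rw [hv]
      refine mk_step_eps M (Sum.inr (Sum.inl (l, zsOf v))) ?_ (cnt_zero' v)
      simp [rule, simTgt_checksub M hp, simEff_checksub M hp, zsOf, hr]

lemma fwd_run {d d' : M.Lbl × (Fin 8 → ℕ)} (w : List Unit)
    (h : Relation.ReflTransGen M.Step d d') :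
    Relation.ReflTransGen (C M).Step (St.sim d.1, w, d.2) (St.sim d'.1, w, d'.2) := by
  induction h with
  | refl => exact Relation.ReflTransGen.refl
  | tail hs ht ih => exact ih.tail (fwd_step M w ht)

lemma fwd_halt (w : List Unit) (v : Fin 8 → ℕ) :
    (C M).Step (St.sim M.lh, w, v) (St.cmp, w, v) := by
  classical
  refine mk_step_eps M (Sum.inr (Sum.inl (M.lh, zsOf v))) ?_ (cnt_zero' v)
  simp only [rule, simTgt_halt M M.haltAt, simEff_halt M M.haltAt, if_pos rfl, if_true]

lemma update_zero_zero :
    Function.update (fun _ => (0:ℕ)) M.inputReg 0 = fun _ => (0:ℕ) := by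
  funext i; by_cases hi : i = M.inputReg <;> simp [Function.update, hi]

lemma zsOf_zero : zsOf (fun _ => (0:ℕ)) = allZ := by
  funext i; simp [zsOf, allZ]

lemma zsOf_upd (x : ℕ) :
    zsOf (Function.update (fun _ => (0:ℕ)) M.inputReg x) =
      if x = 0 then allZ else onlyIn M.inputReg := by
  funext i
  by_cases hx : x = 0 <;> by_cases hi : i = M.inputReg <;>
    simp [zsOf, allZ, onlyIn, Function.update, hx, hi]

lemma fwd_guess_step (w : List Unit) (x : ℕ) :
    (C M).Step (St.start, w, Function.update (fun _ => (0:ℕ)) M.inputReg x)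
      (St.start, w, Function.update (fun _ => (0:ℕ)) M.inputReg (x + 1)) := by
  refine mk_step_eps (eff := e M.inputReg) M (Sum.inl (true, decide (x = 0))) ?_ ?_
  · by_cases hx : x = 0 <;> simp [rule, zsOf_upd, hx, zsOf_zero]
  · intro i
    by_cases hi : i = M.inputReg <;>
      simp [Function.update, e, hi]

lemma fwd_guess (w : List Unit) :
    ∀ x, Relation.ReflTransGen (C M).Step (St.start, w, fun _ => 0)
      (St.start, w, Function.update (fun _ => (0:ℕ)) M.inputReg x) := by
  intro x
  induction x with
  | zero => rw [update_zero_zero]; exact Relation.ReflTransGen.refl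
  | succ x ih => exact ih.tail (fwd_guess_step M w x)

lemma fwd_to_sim (w : List Unit) (x : ℕ) :
    (C M).Step (St.start, w, Function.update (fun _ => (0:ℕ)) M.inputReg x)
      (St.sim M.l0, w, Function.update (fun _ => (0:ℕ)) M.inputReg x) := by
  refine mk_step_eps M (Sum.inl (false, decide (x = 0))) ?_ (cnt_zero' _)
  by_cases hx : x = 0 <;> simp [rule, zsOf_upd, hx, zsOf_zero]

lemma fwd_cmp : ∀ (k : ℕ) (v : Fin 8 → ℕ), v M.outputReg = k →
    ∃ cnt, Relation.ReflTransGen (C M).Step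
      (St.cmp, List.replicate k (), v) (St.accept, [], cnt) := by
  intro k
  induction k with
  | zero =>
      intro v hv
      refine ⟨v, Relation.ReflTransGen.single ?_⟩
      refine mk_step_eps M (Sum.inr (Sum.inr (Sum.inl (zsOf v)))) ?_ (cnt_zero' v)
      have hz : zsOf v M.outputReg = true := by simp [zsOf, hv]
      simp [rule, cmpInp, cmpTgt, cmpEff, hz]
  | succ k ih =>
      intro v hv
      have hr : v M.outputReg ≠ 0 := by omega
      have hz : zsOf v M.outputReg = false := by simp [zsOf, hr]
      obtain ⟨cnt, hrun⟩ := ih (Function.update v M.outputReg (v M.outputReg - 1))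
        (by rw [Function.update_self]; omega)
      refine ⟨cnt, ?_⟩
      rw [List.replicate_succ]
      refine Relation.ReflTransGen.head ?_ hrun
      refine mk_step_sym M (Sum.inr (Sum.inr (Sum.inl (zsOf v)))) ?_
        (cnt_sub' v M.outputReg hr)
      simp [rule, cmpInp, cmpTgt, cmpEff, hz]


lemma card_rules (hM : Nat.card M.Lbl = 21) : (C M).rules.ncard = 23 * 2 ^ 8 + 3 := by
  have : Finite M.Lbl := M.lblFinite
  have h1 : (C M).rules.ncard = Nat.card (Idx M.Lbl) := by
    rw [show (C M).rules.ncard = (Set.range (rule M)).ncard from rfl, ← Nat.card_coe_set_eq,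
      Nat.card_range_of_injective (rule_injective M)]
  rw [h1]
  have hb : Nat.card (Fin 8 → Bool) = 256 := by
    rw [Nat.card_eq_fintype_card]; simp [Fintype.card_fun]
  have h2 : Nat.card Bool = 2 := by rw [Nat.card_eq_fintype_card]; simp
  have h3 : Nat.card (Fin 255) = 255 := by
    rw [Nat.card_eq_fintype_card]; exact Fintype.card_fin 255
  rw [Nat.card_sum, Nat.card_sum, Nat.card_sum, Nat.card_prod, Nat.card_prod,
    hb, hM, h2, h3]
  norm_num

end UCMProof
/-- Simulating each of the 21 instructions of an 8-register universal register
machine by an 8-counter machine takes `2^8` transition rules (one per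
combination of empty/non-empty statuses of the eight counters); together with
`2^8` transitions for comparing the output counter with the input word, `2^8`
transitions for emptying the counters, and `3` initialization transitions, the
simulating counter machine has `m = 21·2^8 + 2^8 + 2^8 + 3 = 23·2^8 + 3 = 5891`
transition rules. -/
theorem universal_counter_machine_size :
    21 * 2 ^ 8 + 2 ^ 8 + 2 ^ 8 + 3 = 23 * 2 ^ 8 + 3 ∧
    23 * 2 ^ 8 + 3 = 5891 ∧
    ∀ M : RegisterMachine 8, Nat.card M.Lbl = 21 →
      ∃ C : CounterMachine Unit 8,
        C.rules.ncard = 23 * 2 ^ 8 + 3 ∧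
        ∀ y : ℕ, (List.replicate y () ∈ C.language ↔ ∃ x, M.Computes x y) := by
  refine ⟨by norm_num, by norm_num, ?_⟩
  intro M hM
  have : Finite M.Lbl := M.lblFinite
  refine ⟨UCMProof.C M, UCMProof.card_rules M hM, ?_⟩
  intro y
  constructor
  · rintro ⟨cnt, hrtg⟩
    obtain ⟨x, regs, hrun, hlen⟩ := UCMProof.start_back M hrtg (List.replicate y ()) _ rfl
    refine ⟨x, regs, ?_, ?_⟩
    · simpa using hrun
    · simpa using hlen.symm
  · rintro ⟨x, regs, hrun, hout⟩
    have h1 := UCMProof.fwd_guess M (List.replicate y ()) x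
    have h2 := UCMProof.fwd_to_sim M (List.replicate y ()) x
    have h3 := UCMProof.fwd_run M (List.replicate y ()) hrun
    have h4 := UCMProof.fwd_halt M (List.replicate y ()) regs
    obtain ⟨cnt, h5⟩ := UCMProof.fwd_cmp M y regs hout
    exact ⟨cnt, (((h1.tail h2).trans h3).tail h4).trans h5⟩
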